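/- Let d, m ≥ 2, n ≥ 1 with n | m−1, and ζ ≠ 1 a d-th root of unity. Let α ∈ ℚ̄ be a root of the Gleason polynomial G_{d,0,n} = ∏_{k|n} a_k^{μ(n/k)}, and let i be a positive divisor of n. Then a_{m+i−1}(α) = ζ·a_{m−1}(α) if and only if i = n. -/

import Mathlib

open Polynomial

private lemma aux_sum_moebius (m : ℕ) (hm : m ≠ 0) :
    (∑ d ∈ m.divisors, ArithmeticFunction.moebius d) = if m = 1 then 1 else 0 := by
  have h := congrArg (fun f : ArithmeticFunction ℤ => f m)
    ArithmeticFunction.moebius_mul_coe_zeta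
  simp only [ArithmeticFunction.mul_apply, ArithmeticFunction.one_apply] at h
  rw [← h, ← Nat.sum_divisorsAntidiagonal
    (fun x y => (ArithmeticFunction.moebius x : ℤ))]
  apply Finset.sum_congr rfl
  intro x hx
  have hx2 : x.2 ≠ 0 := by
    rcases Nat.mem_divisorsAntidiagonal.mp hx with ⟨h1, h2⟩
    intro h0; exact hm (by rw [← h1, h0, mul_zero])
  simp [ArithmeticFunction.natCoe_apply, ArithmeticFunction.zeta_apply_ne hx2]

private lemma aux_rm_pow {F : Type*} [Field F] (α : F) (q : Polynomial F) (hq : q ≠ 0) :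
    ∀ t : ℕ, rootMultiplicity α (q ^ t) = t * rootMultiplicity α q := by
  intro t
  induction t with
  | zero => simp [rootMultiplicity_eq_zero, IsRoot]
  | succ t ih =>
    rw [pow_succ, rootMultiplicity_mul (mul_ne_zero (pow_ne_zero _ hq) hq), ih]
    ring

private lemma aux_rm_prod {F : Type*} [Field F] (α : F) (s : Finset ℕ)
    (f : ℕ → Polynomial F) (h : ∀ k ∈ s, f k ≠ 0) :
    rootMultiplicity α (∏ k ∈ s, f k) = ∑ k ∈ s, rootMultiplicity α (f k) := by
  classical
  induction s using Finset.induction with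
  | empty => simp [rootMultiplicity_eq_zero, IsRoot]
  | @insert x s hx ih =>
    rw [Finset.prod_insert hx, Finset.sum_insert hx,
      rootMultiplicity_mul (mul_ne_zero (h x (Finset.mem_insert_self x s))
        (Finset.prod_ne_zero_iff.mpr fun k hk => h k (Finset.mem_insert_of_mem hk))),
      ih (fun k hk => h k (Finset.mem_insert_of_mem hk))]

/-- d, m ≥ 2, n ≥ 1 with n ∣ m−1, ζ ≠ 1 a d-th root of unity.
If α is a root of the Gleason polynomial G_{d,0,n} = ∏_{k∣n} a_k^{μ(n/k)}
(a polynomial G whose image in the rational function field equals that Möbius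
product), and i is a positive divisor of n, then
a_{m+i−1}(α) = ζ a_{m−1}(α) ⟺ i = n. -/
theorem stmt16 (d m n : ℕ) (hd : 2 ≤ d) (hm : 2 ≤ m) (hn : 1 ≤ n)
    (hndvd : n ∣ m - 1)
    (F : Type*) [Field F] [CharZero F] [IsAlgClosed F]
    (ζ : F) (hζd : ζ ^ d = 1) (hζ1 : ζ ≠ 1)
    (a : ℕ → Polynomial F) (ha0 : a 0 = 0)
    (haS : ∀ i, a (i + 1) = a i ^ d + Polynomial.X)
    (α : F)
    (hα : ∃ G : Polynomial F,
      algebraMap (Polynomial F) (RatFunc F) G =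
        (∏ k ∈ n.divisors, (algebraMap (Polynomial F) (RatFunc F) (a k)) ^
          (ArithmeticFunction.moebius (n / k))) ∧
      Polynomial.eval α G = 0)
    (i : ℕ) (hi : i ∣ n) (hipos : 0 < i) :
    Polynomial.eval α (a (m + i - 1)) = ζ * Polynomial.eval α (a (m - 1)) ↔
      i = n := by
  classical
  obtain ⟨G, hG, hGα⟩ := hα
  have hn0 : n ≠ 0 := by omega
  -- a_k ≠ 0 for k ≥ 1
  have hane : ∀ k, a (k + 1) ≠ 0 := by
    intro k hk
    rw [haS k] at hk
    have h1 : a k ^ d = -X := by linear_combination hk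
    have h2 : (a k ^ d).natDegree = (-X : Polynomial F).natDegree := by rw [h1]
    rw [natDegree_pow, natDegree_neg, natDegree_X] at h2
    have : d ∣ 1 := ⟨_, h2.symm⟩
    have := Nat.le_of_dvd one_pos this
    omega
  have hak : ∀ k ∈ n.divisors, a k ≠ 0 := by
    intro k hk
    have hkpos := Nat.pos_of_mem_divisors hk
    obtain ⟨k', rfl⟩ : ∃ k', k = k' + 1 := ⟨k - 1, by omega⟩
    exact hane k'
  -- natural exponents
  set μ := ArithmeticFunction.moebius with hμdef
  have hμge : ∀ v : ℕ, (-1 : ℤ) ≤ μ v := fun v =>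
    (abs_le.mp ArithmeticFunction.abs_moebius_le_one).1
  set e : ℕ → ℕ := fun k => (μ (n / k) + 1).toNat with hedef
  have hecast : ∀ k, ((e k : ℤ)) = μ (n / k) + 1 := by
    intro k
    have := hμge (n / k)
    simp only [hedef]
    omega
  -- polynomial identity : G * ∏ a k = ∏ a k ^ e k
  have hinj : Function.Injective (algebraMap (Polynomial F) (RatFunc F)) :=
    IsFractionRing.injective _ _
  have hmapne : ∀ k ∈ n.divisors, algebraMap (Polynomial F) (RatFunc F) (a k) ≠ 0 := by
    intro k hk h0
    exact hak k hk (hinj (by rw [h0, map_zero]))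
  have hpoly : G * ∏ k ∈ n.divisors, a k = ∏ k ∈ n.divisors, a k ^ e k := by
    apply hinj
    rw [map_mul, map_prod, map_prod, hG, ← Finset.prod_mul_distrib]
    apply Finset.prod_congr rfl
    intro k hk
    rw [map_pow]
    rw [← zpow_natCast (algebraMap (Polynomial F) (RatFunc F) (a k)) (e k), hecast k,
      zpow_add₀ (hmapne k hk), zpow_one]
  have hprodgen : ∀ t : ℕ → ℕ, (∏ k ∈ n.divisors, a k ^ t k) ≠ 0 := fun t =>
    Finset.prod_ne_zero_iff.mpr fun k hk => pow_ne_zero _ (hak k hk)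
  have hGne : G ≠ 0 := by
    intro h0
    apply hprodgen e
    rw [← hpoly, h0, zero_mul]
  -- some divisor k of n has a_k(α) = 0
  have hex : ∃ k, (0 < k ∧ eval α (a k) = 0) ∧ k ∣ n := by
    have h0 : eval α (∏ k ∈ n.divisors, a k ^ e k) = 0 := by
      rw [← hpoly, eval_mul, hGα, zero_mul]
    rw [eval_prod] at h0
    obtain ⟨k, hk, hk0⟩ := Finset.prod_eq_zero_iff.mp h0
    rw [eval_pow] at hk0
    have := pow_eq_zero_iff'.mp hk0
    exact ⟨k, ⟨Nat.pos_of_mem_divisors hk, this.1⟩, (Nat.mem_divisors.mp hk).1⟩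
  obtain ⟨k₀, hk₀, hk₀n⟩ := hex
  -- least period p
  have hexists : ∃ k, 0 < k ∧ eval α (a k) = 0 := ⟨k₀, hk₀⟩
  set p := Nat.find hexists with hpdef
  have hp : 0 < p ∧ eval α (a p) = 0 := Nat.find_spec hexists
  have hpmin : ∀ j < p, ¬(0 < j ∧ eval α (a j) = 0) := fun j hj => Nat.find_min hexists hj
  -- periodicity
  have hper : ∀ j, eval α (a (j + p)) = eval α (a j) := by
    intro j
    induction j with
    | zero => simpa [ha0] using hp.2
    | succ j ih =>
      have : j + 1 + p = (j + p) + 1 := by ring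
      rw [this, haS, haS]
      simp [ih]
  have hper' : ∀ q r, eval α (a (r + q * p)) = eval α (a r) := by
    intro q
    induction q with
    | zero => simp
    | succ q ih =>
      intro r
      have : r + (q + 1) * p = (r + q * p) + p := by ring
      rw [this, hper, ih]
  have hzero : ∀ j, eval α (a j) = 0 ↔ p ∣ j := by
    intro j
    constructor
    · intro hj
      by_contra hnd
      have hr : j % p ≠ 0 := fun h => hnd (Nat.dvd_iff_mod_eq_zero.mpr h)
      have hj' : eval α (a (j % p)) = 0 := by
        have hrw : j % p + (j / p) * p = j := Nat.mod_add_div' j p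
        rw [← hrw] at hj
        rwa [hper' (j / p) (j % p)] at hj
      exact hpmin (j % p) (Nat.mod_lt _ hp.1) ⟨Nat.pos_of_ne_zero hr, hj'⟩
    · rintro ⟨q, rfl⟩
      have := hper' q 0
      simpa [ha0, mul_comm p q] using this
  have hpn : p ∣ n := dvd_trans ((hzero k₀).mp hk₀.2) hk₀n
  -- root multiplicity e₀ of a_p at α
  have hap_ne : a p ≠ 0 := by
    obtain ⟨p', hp'⟩ : ∃ p', p = p' + 1 := ⟨p - 1, by omega⟩
    rw [hp']; exact hane p'
  set e₀ := rootMultiplicity α (a p) with he₀def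
  have he₀1 : 1 ≤ e₀ := (rootMultiplicity_pos hap_ne).mpr hp.2
  -- difference divisibility
  have hdiff : ∀ k, (X - C α) ^ (d * e₀) ∣ a (k + 1 + p) - a (k + 1) := by
    intro k
    induction k with
    | zero =>
      have h1 : a (0 + 1 + p) = a p ^ d + X := by
        have : 0 + 1 + p = p + 1 := by ring
        rw [this, haS]
      have h2 : a (0 + 1) = X := by
        rw [haS 0, ha0, zero_pow (by omega), zero_add]
      rw [h1, h2, add_sub_cancel_right]
      have := pow_dvd_pow_of_dvd (pow_rootMultiplicity_dvd (a p) α) d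
      rwa [← pow_mul, mul_comm e₀ d] at this
    | succ k ih =>
      have h1 : k + 1 + 1 + p = (k + 1 + p) + 1 := by ring
      rw [h1, haS, haS]
      have h2 : a (k + 1 + p) ^ d + X - (a (k + 1) ^ d + X)
          = a (k + 1 + p) ^ d - a (k + 1) ^ d := by ring
      rw [h2]
      exact ih.trans (sub_dvd_pow_sub_pow _ _ d)
  -- root multiplicity of a_{j p} is e₀ for j ≥ 1
  have hrm_mul : ∀ j, 1 ≤ j → rootMultiplicity α (a (j * p)) = e₀ := by
    intro j hj
    induction j, hj using Nat.le_induction with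
    | base => rw [one_mul]
    | succ j hj ih =>
      have hjp1 : 1 ≤ j * p := Nat.one_le_iff_ne_zero.mpr
        (Nat.mul_ne_zero (by omega) (by omega))
      obtain ⟨t, ht⟩ : ∃ t, j * p = t + 1 := ⟨j * p - 1, by omega⟩
      have hjp_ne : a (j * p) ≠ 0 := by rw [ht]; exact hane t
      have hD := hdiff t
      rw [← ht] at hD
      have hsum : a ((j + 1) * p) = a (j * p) + (a (j * p + p) - a (j * p)) := by
        have : (j + 1) * p = j * p + p := by ring
        rw [this]; ring
      have hnext_ne : a ((j + 1) * p) ≠ 0 := by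
        have h1 : 1 ≤ (j + 1) * p := Nat.one_le_iff_ne_zero.mpr
          (Nat.mul_ne_zero (by omega) (by omega))
        obtain ⟨s, hs⟩ : ∃ s, (j + 1) * p = s + 1 := ⟨(j + 1) * p - 1, by omega⟩
        rw [hs]; exact hane s
      have hle : e₀ ≤ d * e₀ := Nat.le_mul_of_pos_left e₀ (by omega)
      have hlt : e₀ + 1 ≤ d * e₀ := by nlinarith
      -- lower bound
      have hdvd_e : (X - C α) ^ e₀ ∣ a ((j + 1) * p) := by
        rw [hsum]
        apply dvd_add
        · have := pow_rootMultiplicity_dvd (a (j * p)) α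
          rwa [ih] at this
        · exact (pow_dvd_pow _ hle).trans hD
      have hnot : ¬ (X - C α) ^ (e₀ + 1) ∣ a ((j + 1) * p) := by
        intro hcon
        have : (X - C α) ^ (e₀ + 1) ∣ a (j * p) := by
          have heq : a (j * p) = a ((j + 1) * p) - (a (j * p + p) - a (j * p)) := by
            have : (j + 1) * p = j * p + p := by ring
            rw [this]; ring
          rw [heq]
          exact dvd_sub hcon ((pow_dvd_pow _ hlt).trans hD)
        have := (le_rootMultiplicity_iff hjp_ne).mpr this
        omega
      apply le_antisymm
      · rw [← Nat.lt_add_one_iff]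
        by_contra hcon
        push_neg at hcon
        exact hnot ((pow_dvd_pow _ hcon).trans (pow_rootMultiplicity_dvd _ _))
      · exact (le_rootMultiplicity_iff hnext_ne).mpr hdvd_e
  have hrm : ∀ k ∈ n.divisors, rootMultiplicity α (a k) = if p ∣ k then e₀ else 0 := by
    intro k hk
    have hkpos := Nat.pos_of_mem_divisors hk
    by_cases hpk : p ∣ k
    · obtain ⟨j, rfl⟩ := hpk
      rw [if_pos ⟨j, rfl⟩, mul_comm]
      refine hrm_mul j ?_
      rcases Nat.eq_zero_or_pos j with h | h
      · subst h; simp at hkpos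
      · exact h
    · rw [if_neg hpk]
      exact rootMultiplicity_eq_zero (fun h => hpk ((hzero k).mp h))
  -- root multiplicity identity
  have hrmid : rootMultiplicity α G + ∑ k ∈ n.divisors, rootMultiplicity α (a k)
      = ∑ k ∈ n.divisors, e k * rootMultiplicity α (a k) := by
    have h1 := congrArg (rootMultiplicity α) hpoly
    rw [rootMultiplicity_mul (mul_ne_zero hGne (Finset.prod_ne_zero_iff.mpr hak)),
      aux_rm_prod α _ _ hak, aux_rm_prod α _ _ (fun k hk => pow_ne_zero _ (hak k hk))] at h1
    rw [h1]
    exact Finset.sum_congr rfl fun k hk => aux_rm_pow α (a k) (hak k hk) (e k)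
  -- Möbius computation
  have hnp0 : n / p ≠ 0 :=
    Nat.div_ne_zero_iff.mpr ⟨by omega, Nat.le_of_dvd (by omega) hpn⟩
  have hmob : (∑ k ∈ n.divisors, if p ∣ k then (μ (n / k) : ℤ) else 0)
      = if n / p = 1 then 1 else 0 := by
    have hstep : (∑ k ∈ n.divisors, if p ∣ k then (μ (n / k) : ℤ) else 0)
        = ∑ k ∈ n.divisors, if p ∣ n / k then (μ (n / (n / k)) : ℤ) else 0 := by
      exact (Nat.sum_div_divisors n (fun k => if p ∣ k then (μ (n / k) : ℤ) else 0)).symm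
    rw [hstep]
    have hstep2 : (∑ k ∈ n.divisors, if p ∣ n / k then (μ (n / (n / k)) : ℤ) else 0)
        = ∑ k ∈ n.divisors, if k ∣ n / p then (μ k : ℤ) else 0 := by
      apply Finset.sum_congr rfl
      intro k hk
      have hkn : k ∣ n := (Nat.mem_divisors.mp hk).1
      have hiff : p ∣ n / k ↔ k ∣ n / p := by
        rw [Nat.dvd_div_iff_mul_dvd hkn, Nat.dvd_div_iff_mul_dvd hpn, mul_comm]
      have hdd : n / (n / k) = k := Nat.div_div_self hkn hn0
      rw [hdd]
      by_cases h : p ∣ n / k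
      · rw [if_pos h, if_pos (hiff.mp h)]
      · rw [if_neg h, if_neg (fun h' => h (hiff.mpr h'))]
    rw [hstep2, ← Finset.sum_filter, Nat.divisors_filter_dvd_of_dvd hn0 (Nat.div_dvd_of_dvd hpn),
      aux_sum_moebius (n / p) hnp0]
  -- conclude p = n
  have hpeqn : p = n := by
    have hG1 : 1 ≤ rootMultiplicity α G := (rootMultiplicity_pos hGne).mpr hGα
    have hcast : (rootMultiplicity α G : ℤ)
        = ∑ k ∈ n.divisors, ((e k : ℤ) - 1) * rootMultiplicity α (a k) := by
      have h2 : ((rootMultiplicity α G : ℤ))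
          + ∑ k ∈ n.divisors, (rootMultiplicity α (a k) : ℤ)
          = ∑ k ∈ n.divisors, (e k : ℤ) * rootMultiplicity α (a k) := by
        exact_mod_cast congrArg (fun x : ℕ => (x : ℤ)) hrmid
      have h3 : ∑ k ∈ n.divisors, ((e k : ℤ) - 1) * rootMultiplicity α (a k)
          = ∑ k ∈ n.divisors, (e k : ℤ) * rootMultiplicity α (a k)
            - ∑ k ∈ n.divisors, (rootMultiplicity α (a k) : ℤ) := by
        rw [← Finset.sum_sub_distrib]
        apply Finset.sum_congr rfl
        intro k _
        ring
      rw [h3, ← h2]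
      ring
    have hval : (rootMultiplicity α G : ℤ)
        = e₀ * (if n / p = 1 then 1 else 0) := by
      rw [hcast, ← hmob, Finset.mul_sum]
      apply Finset.sum_congr rfl
      intro k hk
      rw [hrm k hk, hecast k]
      by_cases h : p ∣ k
      · rw [if_pos h, if_pos h]; push_cast; ring
      · rw [if_neg h, if_neg h]; push_cast; ring
    by_cases h : n / p = 1
    · obtain ⟨c, hc⟩ := hpn
      rw [hc, Nat.mul_div_cancel_left c (by omega : 0 < p)] at h
      rw [h, mul_one] at hc
      omega
    · rw [if_neg h, mul_zero] at hval
      omega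
  -- final equivalence
  obtain ⟨q, hq⟩ := hndvd
  have hm1 : eval α (a (m - 1)) = 0 := (hzero (m - 1)).mpr (by rw [hpeqn]; exact ⟨q, hq⟩)
  have hmi : eval α (a (m + i - 1)) = eval α (a i) := by
    have h1 : m + i - 1 = i + q * p := by rw [hpeqn, mul_comm]; omega
    rw [h1, hper' q i]
  rw [hmi, hm1, mul_zero]
  constructor
  · intro h
    have hni : n ∣ i := hpeqn ▸ (hzero i).mp h
    exact Nat.dvd_antisymm hi hni
  · rintro rfl
    exact (hzero i).mpr (hpeqn ▸ dvd_rfl)
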